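/- arXiv:1401.5549 — 2 statements merged into one kernel-verified Lean document; each statement's English description precedes it below -/
import Mathlib

section
/- Let M be a complete Riemannian manifold, p, q ∈ M, and x₀ ∈ C_p a minimum point on C_p of F_{p;q}(x) = d(p,x) + d(q,x). Then for any point q₁ on a minimal geodesic from q to x₀ (i.e., any q₁ with d(q,q₁) + d(q₁,x₀) = d(q,x₀)), the point x₀ is also a minimum point on C_p of F_{p;q₁}(x) = d(p,x) + d(q₁,x). -/
open Set Metric Manifold Function ENNReal

noncomputable section

/-- Bundled data of a complete Riemannian `n`-manifold: the underlying smooth manifold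
with its geodesic distance, together with the exponential maps, cut loci,
tangential segment domains, the conjugacy relation along geodesics, lower sectional
curvature bounds and the Riemannian volume, satisfying the standard structural facts
used in the paper. -/
structure RiemannianManifold (n : ℕ) where
  M : Type
  [metM : MetricSpace M]
  [chartedM : ChartedSpace (EuclideanSpace ℝ (Fin n)) M]
  [smoothM : IsManifold (𝓡 n) (⊤ : ℕ∞) M]
  complete : CompleteSpace M
  /-- the exponential map based at a point; the tangent space is modelled on `ℝⁿ`. -/
  exp : M → EuclideanSpace ℝ (Fin n) → M
  /-- the cut locus `C_p` of a point `p` -/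
  cutLocus : M → Set M
  /-- the tangential segment domain `D̃_p ⊆ T_pM`, the maximal open star-shaped
  domain about the origin on which `exp_p` is injective -/
  segDomain : M → Set (EuclideanSpace ℝ (Fin n))
  /-- `ConjugateAlong p x γ` : `p` and `x` are conjugate along the minimal geodesic `γ`
  from `p` to `x` (i.e. `d(exp_p)` is singular at the corresponding tangent vector) -/
  ConjugateAlong : M → M → (ℝ → M) → Prop
  /-- `SecCurvGE k` : the sectional curvature of `M` is everywhere `≥ k` -/
  SecCurvGE : ℝ → Prop
  /-- the Riemannian volume of `M` -/
  vol : ℝ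
  cutLocus_closed : ∀ p, IsClosed (cutLocus p)
  segDomain_open : ∀ p, IsOpen (segDomain p)
  exp_injOn : ∀ p, Set.InjOn (exp p) (segDomain p)
  exp_segDomain : ∀ p, exp p '' segDomain p = (cutLocus p)ᶜ
  dist_exp : ∀ p v, v ∈ segDomain p → dist p (exp p v) = ‖v‖

attribute [instance] RiemannianManifold.metM RiemannianManifold.chartedM
  RiemannianManifold.smoothM

namespace RiemannianManifold

variable {n : ℕ} (R : RiemannianManifold n)

/-- `γ` is a minimal geodesic from `a` to `b`, parametrized by arclength
on `[0, dist a b]`. -/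
def IsMinGeodesic (γ : ℝ → R.M) (a b : R.M) : Prop :=
  γ 0 = a ∧ γ (dist a b) = b ∧
    ∀ s ∈ Icc (0:ℝ) (dist a b), ∀ t ∈ Icc (0:ℝ) (dist a b),
      dist (γ s) (γ t) = |s - t|

/-- `γ` is a (unit-speed, locally minimizing) geodesic on `[0, l]`. -/
def IsGeodesicOn (γ : ℝ → R.M) (l : ℝ) : Prop :=
  ∀ t ∈ Icc (0:ℝ) l, ∃ ε > 0, ∀ s₁ ∈ Icc (0:ℝ) l, ∀ s₂ ∈ Icc (0:ℝ) l,
    |s₁ - t| < ε → |s₂ - t| < ε → dist (γ s₁) (γ s₂) = |s₁ - s₂|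

/-- `γ : ℝ → M` is a complete (unit-speed, locally minimizing) geodesic. -/
def IsGeodesicLine (γ : ℝ → R.M) : Prop :=
  ∀ t : ℝ, ∃ ε > 0, ∀ s₁ s₂ : ℝ, |s₁ - t| < ε → |s₂ - t| < ε →
    dist (γ s₁) (γ s₂) = |s₁ - s₂|

/-- The concatenation of `α : [0,a] → M` (from `p` to `x₀`) with the reversal of
`γ : [0,b] → M` (from `q` to `x₀`), a curve on `[0, a+b]` from `p` through `x₀` to `q`. -/
def concat (α γ : ℝ → R.M) (a b : ℝ) : ℝ → R.M :=
  fun t => if t ≤ a then α t else γ (a + b - t)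

/-- `α : [0,a] → M` and `γ : [0,b] → M`, both ending at a common point `x₀`, fit
together as one smooth geodesic through `x₀`. -/
def FormWholeGeodesic (α γ : ℝ → R.M) (a b : ℝ) : Prop :=
  R.IsGeodesicOn (R.concat α γ a b) (a + b)

/-- `x` is an essential conjugate point of `p` : a cut point of `p` such that `p` is
conjugate to `x` along every minimal geodesic connecting them. -/
def EssentialConjugate (p x : R.M) : Prop :=
  x ∈ R.cutLocus p ∧ ∀ γ : ℝ → R.M, R.IsMinGeodesic γ p x → R.ConjugateAlong p x γ

/-- the essential conjugate radius of `p`: the distance from `p` to its set of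
essential conjugate points (`∞` if there are none). -/
def essConjRad (p : R.M) : ℝ≥0∞ :=
  ⨅ x ∈ {x | R.EssentialConjugate p x}, edist p x

/-- the injectivity radius at `p`, i.e. the distance from `p` to its cut locus
(`∞` if the cut locus is empty). -/
def injRad (p : R.M) : ℝ≥0∞ := ⨅ x ∈ R.cutLocus p, edist p x

/-- the set of lengths of geodesic loops at `p`. -/
def loopLengths (p : R.M) : Set ℝ :=
  {l | 0 < l ∧ ∃ γ : ℝ → R.M, R.IsGeodesicOn γ l ∧ γ 0 = p ∧ γ l = p}

/-- the length of the shortest geodesic loop at `p` (`∞` if there are none). -/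
def shortestLoop (p : R.M) : ℝ≥0∞ := ⨅ l ∈ R.loopLengths p, ENNReal.ofReal l

/-- the set of lengths of smooth closed geodesics in `M`. -/
def closedGeodesicLengths : Set ℝ :=
  {l | 0 < l ∧ ∃ γ : ℝ → R.M, R.IsGeodesicLine γ ∧ Function.Periodic γ l}

/-- the length of the shortest closed geodesic in `M` (`∞` if there are none). -/
def shortestClosedGeodesic : ℝ≥0∞ :=
  ⨅ l ∈ R.closedGeodesicLengths, ENNReal.ofReal l

/-- the injectivity radius of `M`. -/
def injRadM : ℝ≥0∞ := ⨅ p : R.M, R.injRad p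

/-- the essential conjugate radius of `M`. -/
def essConjRadM : ℝ≥0∞ := ⨅ p : R.M, R.essConjRad p

end RiemannianManifold


/-- if `x₀` minimizes `F_{p;q}` on `C_p` and `q₁` lies on a minimal
geodesic from `q` to `x₀`, then `x₀` also minimizes `F_{p;q₁}` on `C_p`. -/
theorem min_point_stable_along_geodesic {n : ℕ} (R : RiemannianManifold n)
    (p q q₁ x₀ : R.M) (hx₀ : x₀ ∈ R.cutLocus p)
    (hmin : ∀ y ∈ R.cutLocus p, dist p x₀ + dist q x₀ ≤ dist p y + dist q y)
    (hq₁ : dist q q₁ + dist q₁ x₀ = dist q x₀) :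
    ∀ y ∈ R.cutLocus p, dist p x₀ + dist q₁ x₀ ≤ dist p y + dist q₁ y := by
  intro y hy
  have h1 := hmin y hy
  have h2 : dist q y ≤ dist q q₁ + dist q₁ y := dist_triangle q q₁ y
  linarith
end
end

section
/- Strict decrease along broken geodesics: let M be a complete Riemannian manifold, p ∈ M, x₀ ∈ C_p, q ∈ M, and suppose a minimal geodesic γ from q to x₀ and a minimal geodesic α from p to x₀ do not fit together as a smooth geodesic at x₀. Then for every interior point y = α(s), 0 < s < d(p,x₀), one has d(p,y) + d(q,y) < d(p,x₀) + d(q,x₀). -/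
open Set Metric Manifold Function ENNReal

noncomputable section

/-- if the minimal geodesics `γ` (from `q` to `x₀ ∈ C_p`) and `α`
(from `p` to `x₀`) do not fit together as a smooth geodesic at `x₀`, then
`d(p,·) + d(q,·)` is strictly smaller than its value at `x₀` at every interior
point `α(s)` of `α`. -/
theorem strict_decrease_broken {n : ℕ} (R : RiemannianManifold n) (p q x₀ : R.M)
    (hx₀ : x₀ ∈ R.cutLocus p)
    (γ : ℝ → R.M) (hγ : R.IsMinGeodesic γ q x₀)
    (α : ℝ → R.M) (hα : R.IsMinGeodesic α p x₀)
    (hbroken : ¬ R.FormWholeGeodesic α γ (dist p x₀) (dist q x₀)) :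
    ∀ s ∈ Set.Ioo (0:ℝ) (dist p x₀),
      dist p (α s) + dist q (α s) < dist p x₀ + dist q x₀ := by
  obtain ⟨hα0, hαa, hαd⟩ := hα
  obtain ⟨hγ0, hγb, hγd⟩ := hγ
  set a := dist p x₀ with ha
  set b := dist q x₀ with hb
  have hb0 : (0:ℝ) ≤ b := dist_nonneg
  intro s hs
  obtain ⟨hs0, hsa⟩ := hs
  have hmem : s ∈ Icc (0:ℝ) a := ⟨hs0.le, hsa.le⟩
  have h0mem : (0:ℝ) ∈ Icc (0:ℝ) a := ⟨le_refl _, by linarith⟩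
  have hamem : a ∈ Icc (0:ℝ) a := ⟨by linarith, le_refl _⟩
  have h1 : dist p (α s) = s := by
    rw [← hα0, hαd 0 h0mem s hmem, zero_sub, abs_neg, abs_of_nonneg hs0.le]
  have hαx : dist (α s) x₀ = a - s := by
    rw [← hαa, hαd s hmem a hamem, abs_of_nonpos (by linarith)]; ring
  have hle : dist q (α s) ≤ (a - s) + b := by
    calc dist q (α s) ≤ dist q x₀ + dist x₀ (α s) := dist_triangle _ _ _
    _ = (a - s) + b := by rw [dist_comm x₀, hαx]; ring
  rcases hle.lt_or_eq with hlt | heq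
  · linarith
  · exfalso
    apply hbroken
    have key : ∀ u ∈ Icc s a, ∀ w ∈ Icc (0:ℝ) b,
        dist (α u) (γ w) = (a - u) + (b - w) := by
      intro u hu w hw
      have humem : u ∈ Icc (0:ℝ) a := ⟨by linarith [hu.1], hu.2⟩
      have hαux : dist (α u) x₀ = a - u := by
        rw [← hαa, hαd u humem a hamem, abs_of_nonpos (by linarith [hu.2])]; ring
      have hγwx : dist (γ w) x₀ = b - w := by
        rw [← hγb, hγd w hw b ⟨hb0, le_refl _⟩, abs_of_nonpos (by linarith [hw.2])]; ring
      have hqγ : dist q (γ w) = w := by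
        rw [← hγ0, hγd 0 ⟨le_refl _, hb0⟩ w hw, zero_sub, abs_neg, abs_of_nonneg hw.1]
      have hαsu : dist (α u) (α s) = u - s := by
        rw [hαd u humem s hmem, abs_of_nonneg (by linarith [hu.1])]
      have hub : dist (α u) (γ w) ≤ (a - u) + (b - w) := by
        calc dist (α u) (γ w) ≤ dist (α u) x₀ + dist x₀ (γ w) := dist_triangle _ _ _
        _ = (a - u) + (b - w) := by rw [hαux, dist_comm x₀, hγwx]
      have hlb : dist q (α s) ≤ dist q (γ w) + dist (γ w) (α u) + dist (α u) (α s) :=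
        dist_triangle4 _ _ _ _
      rw [heq, hqγ, hαsu, dist_comm (γ w) (α u)] at hlb
      linarith
    have hdist : ∀ u ∈ Icc s (a+b), ∀ v ∈ Icc s (a+b),
        dist (R.concat α γ a b u) (R.concat α γ a b v) = |u - v| := by
      have main : ∀ u ∈ Icc s (a+b), ∀ v ∈ Icc s (a+b), u ≤ v →
          dist (R.concat α γ a b u) (R.concat α γ a b v) = v - u := by
        intro u hu v hv huv
        by_cases hva : v ≤ a
        · have hua : u ≤ a := le_trans huv hva
          simp only [RiemannianManifold.concat, if_pos hua, if_pos hva]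
          rw [hαd u ⟨by linarith [hu.1], hua⟩ v ⟨by linarith [hv.1], hva⟩,
            abs_of_nonpos (by linarith)]; ring
        · push_neg at hva
          by_cases hua : u ≤ a
          · simp only [RiemannianManifold.concat, if_pos hua, if_neg (not_le.mpr hva)]
            rw [key u ⟨hu.1, hua⟩ (a+b-v) ⟨by linarith [hv.2], by linarith⟩]; ring
          · push_neg at hua
            simp only [RiemannianManifold.concat, if_neg (not_le.mpr hua),
              if_neg (not_le.mpr hva)]
            rw [hγd (a+b-u) ⟨by linarith [hu.2], by linarith⟩ (a+b-v)
              ⟨by linarith [hv.2], by linarith⟩]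
            have he : a + b - u - (a + b - v) = v - u := by ring
            rw [he, abs_of_nonneg (by linarith)]
      intro u hu v hv
      rcases le_total u v with h' | h'
      · rw [main u hu v hv h', abs_sub_comm, abs_of_nonneg (by linarith)]
      · rw [dist_comm, main v hv u hu h', abs_of_nonneg (by linarith)]
    intro t ht
    by_cases hta : t < a
    · refine ⟨a - t, by linarith, ?_⟩
      intro s₁ hs₁ s₂ hs₂ h₁ h₂
      have h₁' : s₁ ≤ a := by have := abs_lt.mp h₁; linarith [this.2]
      have h₂' : s₂ ≤ a := by have := abs_lt.mp h₂; linarith [this.2]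
      simp only [RiemannianManifold.concat, if_pos h₁', if_pos h₂']
      exact hαd s₁ ⟨hs₁.1, h₁'⟩ s₂ ⟨hs₂.1, h₂'⟩
    · push_neg at hta
      refine ⟨t - s, by linarith, ?_⟩
      intro s₁ hs₁ s₂ hs₂ h₁ h₂
      have h₁' : s ≤ s₁ := by have := abs_lt.mp h₁; linarith [this.1]
      have h₂' : s ≤ s₂ := by have := abs_lt.mp h₂; linarith [this.1]
      exact hdist s₁ ⟨h₁', hs₁.2⟩ s₂ ⟨h₂', hs₂.2⟩
end
end
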